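/- There exists a constant C > 0 such that for every real number r ≥ 2, every integer c ≥ 1, and every positive integer N, with r_i = r^{2^{i−1}} and β_{ij} = (4/3)^{i−j} (log₂ r_{i+1})/(log₂ r_{j+1}) (where r_{0+1} = r): ∑_{i=1}^{N} r_i^{−1/2} · ( β_{i0} (log₂ r)^c + ∑_{j=0}^{i} β_{ij} log₂ r_{j+1} ) ≤ C · r^{−1/2} (log₂ r)^{c+1}. (This is the arithmetic content of the bound showing the total process debt of the algorithm is O((n/√r) log^{c+1} r).) -/

import Mathlib

open Finset

/-- The doubly exponentially growing sequence `r_i = r^(2^(i-1))`, so that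
`r_1 = r` and `r_{i+1} = r_i²`. -/
noncomputable def rseq (r : ℝ) (i : ℕ) : ℝ := r ^ 2 ^ (i - 1)

/-- `β i j = (4/3)^(i-j) · log₂ r_{i+1} / log₂ r_{j+1}` (with `r_{0+1} = r_1 = r`). -/
noncomputable def beta (r : ℝ) (i j : ℕ) : ℝ :=
  (4 / 3 : ℝ) ^ (i - j) * (Real.logb 2 (rseq r (i + 1)) / Real.logb 2 (rseq r (j + 1)))

private lemma nat_aux (k : ℕ) : 5 * k ≤ 17 + 2 ^ k := by
  induction k with
  | zero => norm_num
  | succ n ih =>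
    rcases le_or_gt 3 n with h | h
    · have h7 : 5 ≤ 2 ^ n := le_trans (by norm_num) (Nat.pow_le_pow_right (by norm_num) h)
      have h8 : 2 ^ (n + 1) = 2 ^ n + 2 ^ n := by ring
      omega
    · interval_cases n <;> norm_num

private lemma pow_bound (k : ℕ) : (256 / 9 : ℝ) ^ (k + 1) * 2 ≤ 2 ^ 23 * 2 ^ 2 ^ k := by
  have h3 : 5 * (k + 1) + 1 ≤ 23 + 2 ^ k := by have := nat_aux k; omega
  calc (256 / 9 : ℝ) ^ (k + 1) * 2
      ≤ ((2:ℝ) ^ 5) ^ (k + 1) * 2 := by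
        have : (256 / 9 : ℝ) ^ (k + 1) ≤ ((2:ℝ) ^ 5) ^ (k + 1) :=
          pow_le_pow_left₀ (by norm_num) (by norm_num) _
        linarith
    _ = 2 ^ (5 * (k + 1) + 1) := by rw [← pow_mul, ← pow_succ]
    _ ≤ 2 ^ (23 + 2 ^ k) := pow_le_pow_right₀ (by norm_num) h3
    _ = 2 ^ 23 * 2 ^ 2 ^ k := pow_add 2 23 (2 ^ k)

private lemma key_sqrt (k : ℕ) :
    (16 / 3 : ℝ) ^ (k + 1) ≤ 4096 * ((2:ℝ) ^ (2 ^ k - 1)) ^ ((1:ℝ)/2) := by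
  set b : ℝ := (2:ℝ) ^ (2 ^ k - 1) with hb
  have hb0 : (0:ℝ) ≤ b := by positivity
  have hsq : (b ^ ((1:ℝ)/2)) ^ (2:ℕ) = b := by
    rw [← Real.rpow_natCast (b ^ ((1:ℝ)/2)) 2, ← Real.rpow_mul hb0]; norm_num
  have hrt : (0:ℝ) ≤ b ^ ((1:ℝ)/2) := Real.rpow_nonneg hb0 _
  rw [← pow_le_pow_iff_left₀ (by positivity) (by positivity) (two_ne_zero)]
  have e1 : ((16/3:ℝ) ^ (k+1)) ^ 2 = (256/9 : ℝ) ^ (k+1) := by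
    rw [← pow_mul, mul_comm, pow_mul]; norm_num
  have e2 : ((4096:ℝ) * b ^ ((1:ℝ)/2)) ^ 2 = 2 ^ 24 * b := by
    rw [mul_pow, hsq]; norm_num
  rw [e1, e2]
  have hm : 2 ^ k = (2 ^ k - 1) + 1 := by
    have := Nat.one_le_two_pow (n := k); omega
  have h2 : (2:ℝ) ^ (2 ^ k) = b * 2 := by rw [hb, ← pow_succ, ← hm]
  have := pow_bound k
  rw [h2] at this
  nlinarith [hb0]

private lemma stepB {r : ℝ} (hr : 2 ≤ r) (k : ℕ) :
    (8/3 : ℝ) ^ (k+1) * rseq r (k+1) ^ (-(1/2) : ℝ) ≤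
      4096 * (1/2 : ℝ) ^ (k+1) * r ^ (-(1/2) : ℝ) := by
  have hr0 : (0:ℝ) < r := lt_of_lt_of_le two_pos hr
  set m : ℕ := 2 ^ k with hmm
  have hm1 : 1 ≤ m := Nat.one_le_two_pow
  have hrs : rseq r (k+1) = r ^ m := by simp [rseq, hmm]
  set b : ℝ := (2:ℝ) ^ (m - 1) with hb
  have hb0 : (0:ℝ) < b := by positivity
  have h1 : b * r ≤ r ^ m := by
    have : (2:ℝ) ^ (m-1) ≤ r ^ (m-1) := pow_le_pow_left₀ (by norm_num) hr _
    calc b * r ≤ r ^ (m-1) * r := by nlinarith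
      _ = r ^ (m - 1 + 1) := (pow_succ r (m-1)).symm
      _ = r ^ m := by congr 1; omega
  have h2 : (r ^ m : ℝ) ^ (-(1/2):ℝ) ≤ (b * r) ^ (-(1/2):ℝ) :=
    Real.rpow_le_rpow_of_nonpos (by positivity) h1 (by norm_num)
  have h3 : (b * r) ^ (-(1/2):ℝ) = b ^ (-(1/2):ℝ) * r ^ (-(1/2):ℝ) :=
    Real.mul_rpow hb0.le hr0.le
  have hkey : (8/3:ℝ) ^ (k+1) * b ^ (-(1/2):ℝ) ≤ 4096 * (1/2) ^ (k+1) := by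
    have hbrt : (0:ℝ) < b ^ ((1:ℝ)/2) := Real.rpow_pos_of_pos hb0 _
    have hneg : b ^ (-(1/2):ℝ) = (b ^ ((1:ℝ)/2))⁻¹ := by
      rw [show (-(1/2):ℝ) = -((1:ℝ)/2) by norm_num, Real.rpow_neg hb0.le]
    rw [hneg, mul_inv_le_iff₀ hbrt]
    calc (8/3 : ℝ) ^ (k+1) = (16/3 : ℝ) ^ (k+1) * (1/2 : ℝ) ^ (k+1) := by
          rw [← mul_pow]; norm_num
      _ ≤ (4096 * b ^ ((1:ℝ)/2)) * (1/2 : ℝ) ^ (k+1) :=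
          mul_le_mul_of_nonneg_right (key_sqrt k) (by positivity)
      _ = 4096 * (1/2 : ℝ) ^ (k+1) * b ^ ((1:ℝ)/2) := by ring
  calc (8/3 : ℝ) ^ (k+1) * rseq r (k+1) ^ (-(1/2) : ℝ)
      = (8/3 : ℝ) ^ (k+1) * (r ^ m) ^ (-(1/2) : ℝ) := by rw [hrs]
    _ ≤ (8/3 : ℝ) ^ (k+1) * ((b * r) ^ (-(1/2):ℝ)) := by
        have : (0:ℝ) ≤ (8/3:ℝ) ^ (k+1) := by positivity
        exact mul_le_mul_of_nonneg_left h2 this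
    _ = ((8/3 : ℝ) ^ (k+1) * b ^ (-(1/2):ℝ)) * r ^ (-(1/2):ℝ) := by rw [h3]; ring
    _ ≤ (4096 * (1/2 : ℝ) ^ (k+1)) * r ^ (-(1/2) : ℝ) := by
        have : (0:ℝ) ≤ r ^ (-(1/2):ℝ) := Real.rpow_nonneg hr0.le _
        exact mul_le_mul_of_nonneg_right hkey this
    _ = 4096 * (1/2 : ℝ) ^ (k+1) * r ^ (-(1/2) : ℝ) := by ring

private lemma one_le_logb {r : ℝ} (hr : 2 ≤ r) : 1 ≤ Real.logb 2 r := by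
  rw [show (1:ℝ) = Real.logb 2 2 by simp]
  exact Real.logb_le_logb_of_le (by norm_num) (by norm_num) hr

private lemma pointwise {r : ℝ} (hr : 2 ≤ r) {c : ℕ} (hc : 1 ≤ c) {i : ℕ} (hi : 1 ≤ i) :
    rseq r i ^ (-(1 / 2) : ℝ) *
        (beta r i 0 * (Real.logb 2 r) ^ c +
          ∑ j ∈ Finset.range (i + 1), beta r i j * Real.logb 2 (rseq r (j + 1))) ≤
      20480 * (1/2 : ℝ) ^ i * r ^ (-(1/2) : ℝ) * (Real.logb 2 r) ^ (c + 1) := by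
  have hr0 : (0:ℝ) < r := lt_of_lt_of_le two_pos hr
  set L := Real.logb 2 r with hLdef
  have hL : 1 ≤ L := one_le_logb hr
  have hL0 : (0:ℝ) < L := lt_of_lt_of_le one_pos hL
  have hlog : ∀ j : ℕ, Real.logb 2 (rseq r (j + 1)) = 2 ^ j * L := by
    intro j
    have h : rseq r (j+1) = r ^ (2^j : ℕ) := by simp [rseq]
    rw [h, Real.logb_pow]; push_cast; ring
  have hbeta : ∀ j : ℕ, beta r i j * Real.logb 2 (rseq r (j + 1))
      = (4/3:ℝ) ^ (i - j) * (2 ^ i * L) := by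
    intro j
    unfold beta
    rw [hlog i, hlog j, mul_assoc, div_mul_cancel₀]
    exact mul_ne_zero (by positivity) (ne_of_gt hL0)
  have hbeta0 : beta r i 0 = (4/3:ℝ) ^ i * 2 ^ i := by
    unfold beta
    rw [hlog i, hlog 0, Nat.sub_zero, pow_zero, one_mul]
    field_simp
  have hsum : ∑ j ∈ Finset.range (i + 1), beta r i j * Real.logb 2 (rseq r (j + 1))
      ≤ 4 * ((4/3:ℝ) ^ i * 2 ^ i) * L := by
    have h1 : ∑ j ∈ Finset.range (i + 1), beta r i j * Real.logb 2 (rseq r (j + 1))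
        = (∑ j ∈ Finset.range (i+1), (4/3:ℝ) ^ (i-j)) * (2 ^ i * L) := by
      rw [Finset.sum_mul]; exact Finset.sum_congr rfl (fun j _ => hbeta j)
    have h2 : ∑ j ∈ Finset.range (i+1), (4/3:ℝ) ^ (i-j)
        = ∑ j ∈ Finset.range (i+1), (4/3:ℝ) ^ j := by
      have := Finset.sum_range_reflect (fun j => (4/3:ℝ) ^ j) (i+1)
      simpa using this
    have h3 : ∑ j ∈ Finset.range (i+1), (4/3:ℝ) ^ j ≤ 4 * (4/3:ℝ) ^ i := by
      rw [geom_sum_eq (by norm_num)]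
      rw [div_le_iff₀ (by norm_num)]
      have hp := pow_succ (4/3:ℝ) i
      have hpos : (0:ℝ) < (4/3:ℝ) ^ i := by positivity
      nlinarith
    rw [h1, h2]
    have h4 : (0:ℝ) ≤ 2 ^ i * L := by positivity
    calc (∑ j ∈ Finset.range (i+1), (4/3:ℝ) ^ j) * (2 ^ i * L)
        ≤ (4 * (4/3:ℝ) ^ i) * (2 ^ i * L) := mul_le_mul_of_nonneg_right h3 h4
      _ = 4 * ((4/3:ℝ) ^ i * 2 ^ i) * L := by ring
  have hLc : L ^ c ≤ L ^ (c+1) := pow_le_pow_right₀ hL (Nat.le_succ c)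
  have hL1 : L ≤ L ^ (c+1) := by
    calc L = L ^ 1 := (pow_one L).symm
      _ ≤ L ^ (c+1) := pow_le_pow_right₀ hL (by omega)
  have hA : (0:ℝ) ≤ (4/3:ℝ) ^ i * 2 ^ i := by positivity
  have hbr : beta r i 0 * L ^ c +
      ∑ j ∈ Finset.range (i + 1), beta r i j * Real.logb 2 (rseq r (j + 1))
      ≤ 5 * ((4/3:ℝ) ^ i * 2 ^ i) * L ^ (c+1) := by
    have e1 : beta r i 0 * L ^ c ≤ ((4/3:ℝ) ^ i * 2 ^ i) * L ^ (c+1) := by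
      rw [hbeta0]; exact mul_le_mul_of_nonneg_left hLc hA
    have e2 : ∑ j ∈ Finset.range (i + 1), beta r i j * Real.logb 2 (rseq r (j + 1))
        ≤ 4 * ((4/3:ℝ) ^ i * 2 ^ i) * L ^ (c+1) := by
      calc ∑ j ∈ Finset.range (i + 1), beta r i j * Real.logb 2 (rseq r (j + 1))
          ≤ 4 * ((4/3:ℝ) ^ i * 2 ^ i) * L := hsum
        _ ≤ 4 * ((4/3:ℝ) ^ i * 2 ^ i) * L ^ (c+1) := by
            exact mul_le_mul_of_nonneg_left hL1 (by positivity)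
      
    linarith
  have hrs0 : (0:ℝ) ≤ rseq r i ^ (-(1/2):ℝ) := by
    have : (0:ℝ) ≤ rseq r i := by unfold rseq; positivity
    exact Real.rpow_nonneg this _
  obtain ⟨k, rfl⟩ : ∃ k, i = k + 1 := ⟨i - 1, by omega⟩
  have h83 : (4/3:ℝ) ^ (k+1) * 2 ^ (k+1) = (8/3:ℝ) ^ (k+1) := by
    rw [← mul_pow]; norm_num
  calc rseq r (k+1) ^ (-(1 / 2) : ℝ) *
        (beta r (k+1) 0 * L ^ c +
          ∑ j ∈ Finset.range (k+1 + 1), beta r (k+1) j * Real.logb 2 (rseq r (j + 1)))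
      ≤ rseq r (k+1) ^ (-(1/2):ℝ) * (5 * ((4/3:ℝ) ^ (k+1) * 2 ^ (k+1)) * L ^ (c+1)) :=
        mul_le_mul_of_nonneg_left hbr hrs0
    _ = 5 * L ^ (c+1) * ((8/3:ℝ) ^ (k+1) * rseq r (k+1) ^ (-(1/2):ℝ)) := by
        rw [h83]; ring
    _ ≤ 5 * L ^ (c+1) * (4096 * (1/2:ℝ) ^ (k+1) * r ^ (-(1/2):ℝ)) := by
        exact mul_le_mul_of_nonneg_left (stepB hr k) (by positivity)
    _ = 20480 * (1/2:ℝ) ^ (k+1) * r ^ (-(1/2):ℝ) * L ^ (c+1) := by ring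

/-- The arithmetic content of the total process debt bound: there is a
universal constant `C` such that for every `r ≥ 2`, every `c ≥ 1` and every `N`,
`∑_{i=1}^{N} r_i^{-1/2} (β_{i0} (log₂ r)^c + ∑_{j=0}^{i} β_{ij} log₂ r_{j+1})`
is at most `C · r^{-1/2} (log₂ r)^{c+1}`. -/
theorem total_process_debt_bound :
    ∃ C : ℝ, 0 < C ∧ ∀ r : ℝ, 2 ≤ r → ∀ c : ℕ, 1 ≤ c → ∀ N : ℕ, 1 ≤ N →
      ∑ i ∈ Finset.Icc 1 N,
          rseq r i ^ (-(1 / 2) : ℝ) *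
            (beta r i 0 * (Real.logb 2 r) ^ c +
              ∑ j ∈ Finset.range (i + 1), beta r i j * Real.logb 2 (rseq r (j + 1))) ≤
        C * r ^ (-(1 / 2) : ℝ) * (Real.logb 2 r) ^ (c + 1) := by
  refine ⟨40960, by norm_num, ?_⟩
  intro r hr c hc N hN
  have hr0 : (0:ℝ) < r := lt_of_lt_of_le two_pos hr
  have hL : 1 ≤ Real.logb 2 r := one_le_logb hr
  have hrp : (0:ℝ) ≤ r ^ (-(1/2):ℝ) := Real.rpow_nonneg hr0.le _
  have hLp : (0:ℝ) ≤ (Real.logb 2 r) ^ (c+1) := by positivity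
  have hgeo : ∑ i ∈ Finset.Icc 1 N, (1/2:ℝ) ^ i ≤ 2 := by
    calc ∑ i ∈ Finset.Icc 1 N, (1/2:ℝ) ^ i
        ≤ ∑ i ∈ Finset.range (N+1), (1/2:ℝ) ^ i := by
          refine Finset.sum_le_sum_of_subset_of_nonneg ?_ (fun i _ _ => by positivity)
          intro x hx
          simp only [Finset.mem_Icc, Finset.mem_range] at *
          omega
      _ ≤ 2 := sum_geometric_two_le (N+1)
  calc ∑ i ∈ Finset.Icc 1 N,
          rseq r i ^ (-(1 / 2) : ℝ) *
            (beta r i 0 * (Real.logb 2 r) ^ c +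
              ∑ j ∈ Finset.range (i + 1), beta r i j * Real.logb 2 (rseq r (j + 1)))
      ≤ ∑ i ∈ Finset.Icc 1 N,
          20480 * (1/2:ℝ) ^ i * r ^ (-(1/2):ℝ) * (Real.logb 2 r) ^ (c+1) :=
        Finset.sum_le_sum (fun i hi => pointwise hr hc (Finset.mem_Icc.mp hi).1)
    _ = (∑ i ∈ Finset.Icc 1 N, (1/2:ℝ) ^ i) *
          (20480 * r ^ (-(1/2):ℝ) * (Real.logb 2 r) ^ (c+1)) := by
        rw [Finset.sum_mul]
        exact Finset.sum_congr rfl (fun i _ => by ring)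
    _ ≤ 2 * (20480 * r ^ (-(1/2):ℝ) * (Real.logb 2 r) ^ (c+1)) := by
        exact mul_le_mul_of_nonneg_right hgeo (by positivity)
    _ = 40960 * r ^ (-(1 / 2) : ℝ) * (Real.logb 2 r) ^ (c + 1) := by norm_num; ring
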